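/- Define f(α) = 1^T (I - Diag(1-α)P)^{-1} Diag(α) s for α in the open set where all α_i ∈ (0,1]. With M = I - Diag(1-α)P, the gradient of f satisfies ∇f(α) = Diag(M^{-T} 1)(s - P M^{-1} Diag(α) s), i.e., ∂f/∂α_i = v_i (s_i - p_i^T M^{-1} Diag(α) s), where v = M^{-T} 1 and p_i^T is the i-th row of P. -/

import Mathlib

open Matrix

attribute [local instance] Matrix.linftyOpNormedAddCommGroup Matrix.linftyOpNormedRing
  Matrix.linftyOpNormedAlgebra

lemma alg_aux {n : ℕ} (P A : Matrix (Fin n) (Fin n) ℝ) (α s : Fin n → ℝ) (i : Fin n) :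
    ∑ j, ∑ k, ((-(A * (Matrix.single i i 1 * P) * A) : Matrix (Fin n) (Fin n) ℝ) j k * (α k * s k)
        + A j k * (if k = i then s i else 0))
      = (Aᵀ *ᵥ fun _ => (1 : ℝ)) i * (s i - (P *ᵥ (A *ᵥ fun j => α j * s j)) i) := by
  have h1 : ∀ j k, ((A * (Matrix.single i i 1 * P) * A) : Matrix (Fin n) (Fin n) ℝ) j k
      = A j i * ∑ b, P i b * A b k := by
    intro j k
    rw [Matrix.mul_apply]
    have h2 : ∀ b, ((A * (Matrix.single i i 1 * P)) : Matrix (Fin n) (Fin n) ℝ) j b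
        = A j i * P i b := by
      intro b
      rw [Matrix.mul_apply]
      rw [Finset.sum_eq_single i]
      · simp
      · intro a _ ha; simp [Matrix.single_mul_apply_of_ne _ _ _ _ _ ha]
      · simp
    simp only [h2]
    rw [Finset.mul_sum]
    apply Finset.sum_congr rfl
    intro b _
    ring
  simp only [Matrix.neg_apply, h1, Matrix.mulVec, dotProduct, Matrix.transpose_apply]
  rw [Finset.sum_congr rfl (fun j _ => Finset.sum_add_distrib), Finset.sum_add_distrib]
  have h3 : ∑ j, ∑ k, A j k * (if k = i then s i else 0) = (∑ j, A j i) * s i := by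
    rw [Finset.sum_mul]
    exact Finset.sum_congr rfl fun j _ => by simp [mul_ite]
  rw [h3]
  have h4 : ∑ j, ∑ k, -(A j i * ∑ b, P i b * A b k) * (α k * s k)
      = -((∑ j, A j i) * (∑ b, P i b * ∑ k, A b k * (α k * s k))) := by
    rw [Finset.sum_mul, ← Finset.sum_neg_distrib]
    apply Finset.sum_congr rfl
    intro j _
    calc ∑ k, -(A j i * ∑ b, P i b * A b k) * (α k * s k)
        = ∑ k, ∑ b, -(A j i * (P i b * (A b k * (α k * s k)))) := by
          apply Finset.sum_congr rfl
          intro k _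
          rw [Finset.mul_sum, neg_mul, Finset.sum_mul, ← Finset.sum_neg_distrib]
          exact Finset.sum_congr rfl fun b _ => by ring
      _ = ∑ b, ∑ k, -(A j i * (P i b * (A b k * (α k * s k)))) := Finset.sum_comm
      _ = -(A j i * ∑ b, P i b * ∑ k, A b k * (α k * s k)) := by
          rw [Finset.mul_sum, ← Finset.sum_neg_distrib]
          apply Finset.sum_congr rfl
          intro b _
          rw [Finset.mul_sum, Finset.mul_sum, ← Finset.sum_neg_distrib]
  rw [h4]
  simp only [mul_one]
  ring


lemma unit_aux {n : ℕ} (P : Matrix (Fin n) (Fin n) ℝ) (α : Fin n → ℝ)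
    (hP0 : ∀ i j, 0 ≤ P i j) (hP1 : ∀ i, ∑ j, P i j = 1)
    (hα : ∀ i, 0 < α i ∧ α i ≤ 1) :
    IsUnit ((1 : Matrix (Fin n) (Fin n) ℝ) - diagonal (fun j => 1 - α j) * P) := by
  rw [Matrix.isUnit_iff_isUnit_det, isUnit_iff_ne_zero]
  apply det_ne_zero_of_sum_row_lt_diag
  intro k
  have hd0 : 0 ≤ 1 - α k := by linarith [(hα k).2]
  have hd1 : 1 - α k < 1 := by linarith [(hα k).1]
  have hPkk : P k k ≤ 1 := by
    rw [← hP1 k]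
    exact Finset.single_le_sum (fun j _ => hP0 k j) (Finset.mem_univ k)
  have hrow : ∑ j ∈ Finset.univ.erase k, P k j = 1 - P k k := by
    have := Finset.sum_erase_add Finset.univ (P k) (Finset.mem_univ k)
    rw [hP1 k] at this; linarith
  have hdiag : ((1 : Matrix (Fin n) (Fin n) ℝ) - diagonal (fun j => 1 - α j) * P) k k
      = 1 - (1 - α k) * P k k := by
    simp [Matrix.sub_apply, Matrix.one_apply, Matrix.diagonal_mul]
  have hoff : ∀ j, j ≠ k → ((1 : Matrix (Fin n) (Fin n) ℝ) - diagonal (fun j => 1 - α j) * P) k j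
      = -((1 - α k) * P k j) := by
    intro j hj
    simp [Matrix.sub_apply, Matrix.one_apply, Matrix.diagonal_mul, (Ne.symm hj)]
  have hpos : 0 < 1 - (1 - α k) * P k k := by
    nlinarith [(hα k).1, hP0 k k]
  calc ∑ j ∈ Finset.univ.erase k, ‖((1 : Matrix (Fin n) (Fin n) ℝ) - diagonal (fun j => 1 - α j) * P) k j‖
      = ∑ j ∈ Finset.univ.erase k, (1 - α k) * P k j := by
        apply Finset.sum_congr rfl
        intro j hj
        rw [hoff j (Finset.ne_of_mem_erase hj)]
        rw [norm_neg, Real.norm_eq_abs, abs_of_nonneg (mul_nonneg hd0 (hP0 k j))]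
    _ = (1 - α k) * (1 - P k k) := by rw [← Finset.mul_sum, hrow]
    _ < 1 - (1 - α k) * P k k := by nlinarith [(hα k).1]
    _ = ‖((1 : Matrix (Fin n) (Fin n) ℝ) - diagonal (fun j => 1 - α j) * P) k k‖ := by
        rw [hdiag, Real.norm_eq_abs, abs_of_pos hpos]

/-- Partial derivatives of `f(α) = 1ᵀ (I - Diag(1-α)P)⁻¹ Diag(α) s`:
`∂f/∂α_i = v_i (s_i - p_iᵀ M⁻¹ Diag(α) s)` where `v = M⁻ᵀ 1`. -/
theorem stmt3 {n : ℕ} (P : Matrix (Fin n) (Fin n) ℝ) (α s : Fin n → ℝ)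
    (hP0 : ∀ i j, 0 ≤ P i j) (hP1 : ∀ i, ∑ j, P i j = 1)
    (hα : ∀ i, 0 < α i ∧ α i ≤ 1) (hs : ∀ i, 0 ≤ s i ∧ s i ≤ 1) :
    ∀ i : Fin n,
      HasDerivAt
        (fun t : ℝ => ∑ j,
          (((1 : Matrix (Fin n) (Fin n) ℝ)
              - diagonal (fun j => 1 - Function.update α i t j) * P)⁻¹ *ᵥ
            (fun j => Function.update α i t j * s j)) j)
        ((((1 : Matrix (Fin n) (Fin n) ℝ) - diagonal (fun j => 1 - α j) * P)⁻¹ᵀ *ᵥ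
            (fun _ => (1 : ℝ))) i *
          (s i - (P *ᵥ (((1 : Matrix (Fin n) (Fin n) ℝ)
              - diagonal (fun j => 1 - α j) * P)⁻¹ *ᵥ fun j => α j * s j)) i))
        (α i) := by
  intro i
  set B : Matrix (Fin n) (Fin n) ℝ := Matrix.single i i 1 * P with hB
  set C : Matrix (Fin n) (Fin n) ℝ :=
    1 - diagonal (fun j => if j = i then 1 else 1 - α j) * P with hC
  set M : Matrix (Fin n) (Fin n) ℝ := 1 - diagonal (fun j => 1 - α j) * P with hMdef
  have hunit : IsUnit M := unit_aux P α hP0 hP1 hα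
  have hMt : ∀ t : ℝ, ((1 : Matrix (Fin n) (Fin n) ℝ)
      - diagonal (fun j => 1 - Function.update α i t j) * P) = C + t • B := by
    intro t
    ext a b
    by_cases ha : a = i
    · subst ha
      simp only [hC, hB, Matrix.sub_apply, Matrix.add_apply, Matrix.smul_apply,
        Matrix.diagonal_mul, Function.update_self, Matrix.one_apply, smul_eq_mul,
        Matrix.single_mul_apply_same, one_mul]
      simp
      ring
    · simp only [hC, hB, Matrix.sub_apply, Matrix.add_apply, Matrix.smul_apply,
        Matrix.diagonal_mul, Function.update_of_ne ha, Matrix.one_apply, smul_eq_mul,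
        Matrix.single_mul_apply_of_ne _ _ _ _ _ ha, if_neg ha, mul_zero, add_zero]
  have hM_at : C + α i • B = M := by
    rw [← hMt (α i)]
    simp only [Function.update_eq_self]
    exact hMdef.symm
  set u : (Matrix (Fin n) (Fin n) ℝ)ˣ := hunit.unit with hu
  have huspec : (u : Matrix (Fin n) (Fin n) ℝ) = M := hunit.unit_spec
  have huinv : ((u⁻¹ : (Matrix (Fin n) (Fin n) ℝ)ˣ) : Matrix (Fin n) (Fin n) ℝ) = M⁻¹ := by
    rw [Matrix.nonsing_inv_eq_ringInverse, ← huspec, Ring.inverse_unit]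
  have hcurve : HasDerivAt (fun t : ℝ => C + t • B) B (α i) := by
    have h := ((hasDerivAt_id (α i)).smul_const B).const_add C
    simp only [id, one_smul] at h
    exact h
  have hcu : HasFDerivAt Ring.inverse
      (-(ContinuousLinearMap.mulLeftRight ℝ _ (↑u⁻¹) (↑u⁻¹))) (C + α i • B) := by
    rw [hM_at, ← huspec]
    exact hasFDerivAt_ringInverse u
  have hinv : HasDerivAt (fun t : ℝ => Ring.inverse (C + t • B)) (-(M⁻¹ * B * M⁻¹)) (α i) := by
    have h := hcu.comp_hasDerivAt (α i) hcurve
    simp only [ContinuousLinearMap.neg_apply, ContinuousLinearMap.mulLeftRight_apply,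
      huinv] at h
    exact h
  have hRinv : Ring.inverse (C + α i • B) = M⁻¹ := by
    rw [hM_at, ← Matrix.nonsing_inv_eq_ringInverse]
  have entry : ∀ j k : Fin n,
      HasDerivAt (fun t : ℝ => Ring.inverse (C + t • B) j k)
        ((-(M⁻¹ * B * M⁻¹) : Matrix (Fin n) (Fin n) ℝ) j k) (α i) := by
    intro j k
    let E : Matrix (Fin n) (Fin n) ℝ →ₗ[ℝ] ℝ :=
      { toFun := fun A => A j k
        map_add' := fun _ _ => rfl
        map_smul' := fun _ _ => rfl }
    have hE := (LinearMap.toContinuousLinearMap E).hasFDerivAt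
      (x := Ring.inverse (C + α i • B))
    exact hE.comp_hasDerivAt (α i) hinv
  have hx : ∀ k : Fin n, HasDerivAt (fun t : ℝ => Function.update α i t k * s k)
      (if k = i then s i else 0) (α i) := by
    intro k
    by_cases hk : k = i
    · subst hk
      simp only [Function.update_self, if_pos rfl]
      simpa using (hasDerivAt_id (α k)).mul_const (s k)
    · simp only [Function.update_of_ne hk, if_neg hk]
      exact hasDerivAt_const _ _
  have hterm : ∀ j k : Fin n,
      HasDerivAt (fun t : ℝ => Ring.inverse (C + t • B) j k * (Function.update α i t k * s k))
        ((-(M⁻¹ * B * M⁻¹) : Matrix (Fin n) (Fin n) ℝ) j k * (α k * s k)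
          + M⁻¹ j k * (if k = i then s i else 0)) (α i) := by
    intro j k
    have h := (entry j k).mul (hx k)
    simp only [Function.update_eq_self, hRinv] at h
    exact h
  have hsum : HasDerivAt
      (fun t : ℝ => ∑ j, ∑ k, Ring.inverse (C + t • B) j k * (Function.update α i t k * s k))
      (∑ j, ∑ k, ((-(M⁻¹ * B * M⁻¹) : Matrix (Fin n) (Fin n) ℝ) j k * (α k * s k)
          + M⁻¹ j k * (if k = i then s i else 0))) (α i) :=
    HasDerivAt.fun_sum fun j _ => HasDerivAt.fun_sum fun k _ => hterm j k
  have hfun : (fun t : ℝ => ∑ j,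
        (((1 : Matrix (Fin n) (Fin n) ℝ)
            - diagonal (fun j => 1 - Function.update α i t j) * P)⁻¹ *ᵥ
          (fun j => Function.update α i t j * s j)) j)
      = fun t : ℝ => ∑ j, ∑ k, Ring.inverse (C + t • B) j k * (Function.update α i t k * s k) := by
    funext t
    rw [hMt t, Matrix.nonsing_inv_eq_ringInverse]
    simp [Matrix.mulVec, dotProduct]
  have halg := alg_aux P (M⁻¹) α s i
  rw [← hB] at halg
  rw [hfun, ← halg]
  exact hsum
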